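/- arXiv:2101.09383 — 5 statements merged into one kernel-verified Lean document; each statement's English description precedes it below -/
import Mathlib

section
/- In the Lightning Model, the probability that the origin weakly percolates (there exist infinitely many vertices reachable from 0 by open directed paths) equals the probability that infinitely many vertices have an open directed path to 0. -/
open MeasureTheory

/-- Two vertices of `ℤ²` are nearest neighbors. -/
def LatticeAdj (a b : ℤ × ℤ) : Prop :=
  (a.1 - b.1).natAbs + (a.2 - b.2).natAbs = 1

/-- The directed edge from `a` to a nearest neighbor `b` is `ε`-open iff `φ b < φ a + ε`. -/
def EdgeOpen (φ : ℤ × ℤ → ℝ) (ε : ℝ) (a b : ℤ × ℤ) : Prop :=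
  LatticeAdj a b ∧ φ b < φ a + ε

/-- There is an open directed path from `a` to `b` in the configuration `f_ε(φ)`. -/
def Reaches (φ : ℤ × ℤ → ℝ) (ε : ℝ) (a b : ℤ × ℤ) : Prop :=
  Relation.ReflTransGen (EdgeOpen φ ε) a b

/-- The uniform measure on `[0,1]`. -/
noncomputable def unifM : Measure ℝ := volume.restrict (Set.Icc (0 : ℝ) 1)

instance : IsProbabilityMeasure unifM :=
  ⟨by simp [unifM, Real.volume_Icc]⟩

lemma unif_map_one_sub : unifM.map (fun x => 1 - x) = unifM := by
  have hm : Measurable (fun x : ℝ => 1 - x) := measurable_const.sub measurable_id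
  have h1 : (fun x : ℝ => 1 - x) ⁻¹' (Set.Icc 0 1) = Set.Icc 0 1 := by
    ext x
    simp only [Set.mem_preimage, Set.mem_Icc]
    constructor <;> intro h <;> constructor <;> linarith [h.1, h.2]
  calc (volume.restrict (Set.Icc (0:ℝ) 1)).map (fun x => 1 - x)
      = ((volume.map (fun x => 1 - x)).restrict (Set.Icc 0 1)) := by
        rw [Measure.restrict_map hm measurableSet_Icc, h1]
    _ = volume.restrict (Set.Icc 0 1) := by
        rw [Measure.map_sub_left_eq_self volume 1]

lemma unif_one_sub_preimage {t : Set ℝ} (ht : MeasurableSet t) :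
    unifM ((fun x : ℝ => 1 - x) ⁻¹' t) = unifM t := by
  have hm : Measurable (fun x : ℝ => 1 - x) := measurable_const.sub measurable_id
  rw [← Measure.map_apply hm ht, unif_map_one_sub]

/-- The product family of uniform measures. -/
noncomputable def unifP : ∀ I : Finset (ℤ × ℤ), Measure (∀ _ : I, ℝ) :=
  fun _ => Measure.pi fun _ => unifM

instance (I : Finset (ℤ × ℤ)) : IsProbabilityMeasure (unifP I) := by
  unfold unifP; infer_instance

lemma lm_isProjLimit (ν : Measure ((ℤ × ℤ) → ℝ)) [IsProbabilityMeasure ν]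
    (hindep : ProbabilityTheory.iIndepFun
      (fun (a : ℤ × ℤ) (φ : (ℤ × ℤ) → ℝ) => φ a) ν)
    (hunif : ∀ a : ℤ × ℤ, ν.map (fun φ => φ a) = volume.restrict (Set.Icc (0 : ℝ) 1)) :
    IsProjectiveLimit ν unifP := by
  classical
  intro I
  have hrm : Measurable (I.restrict : ((ℤ × ℤ) → ℝ) → _) :=
    measurable_pi_lambda _ (fun _ => measurable_pi_apply _)
  refine (Measure.pi_eq fun s hs => ?_).symm
  set t : ℤ × ℤ → Set ℝ := fun a => if h : a ∈ I then s ⟨a, h⟩ else Set.univ with ht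
  have htm : ∀ a, MeasurableSet (t a) := by
    intro a
    by_cases h : a ∈ I <;> simp [ht, h, hs]
  rw [Measure.map_apply hrm (MeasurableSet.univ_pi hs)]
  have hpre : (I.restrict : ((ℤ × ℤ) → ℝ) → _) ⁻¹' Set.pi Set.univ s
      = ⋂ a ∈ I, (fun φ : (ℤ × ℤ) → ℝ => φ a) ⁻¹' t a := by
    ext φ
    simp only [Set.mem_preimage, Set.mem_pi, Set.mem_univ, forall_true_left,
      Set.mem_iInter]
    constructor
    · intro h a ha
      simpa [ht, ha] using h ⟨a, ha⟩
    · intro h i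
      simpa [ht, i.2] using h i.1 i.2
  rw [hpre]
  have hmeas : ∀ a ∈ I, MeasurableSet[(inferInstance : MeasurableSpace ℝ).comap
      (fun φ : (ℤ × ℤ) → ℝ => φ a)] ((fun φ : (ℤ × ℤ) → ℝ => φ a) ⁻¹' t a) :=
    fun a _ => ⟨t a, htm a, rfl⟩
  rw [hindep.meas_biInter hmeas]
  have hterm : ∀ a, ν ((fun φ : (ℤ × ℤ) → ℝ => φ a) ⁻¹' t a) = unifM (t a) := by
    intro a
    rw [← Measure.map_apply (measurable_pi_apply a) (htm a), hunif a]
    rfl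
  calc ∏ a ∈ I, ν ((fun φ : (ℤ × ℤ) → ℝ => φ a) ⁻¹' t a)
      = ∏ a ∈ I, unifM (t a) := Finset.prod_congr rfl fun a _ => hterm a
    _ = ∏ i : I, unifM (t i.1) := (Finset.prod_attach I fun a => unifM (t a)).symm
    _ = ∏ i : I, unifM (s i) := by
        refine Finset.prod_congr rfl fun i _ => ?_
        simp [ht, i.2]

lemma measurableSet_reaches (ε : ℝ) (a b : ℤ × ℤ) :
    MeasurableSet {φ : ℤ × ℤ → ℝ | Reaches φ ε a b} := by
  classical
  have key : ∀ (l : List (ℤ × ℤ)) (a : ℤ × ℤ),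
      MeasurableSet {φ : ℤ × ℤ → ℝ | List.Chain (EdgeOpen φ ε) a l} := by
    intro l
    induction l with
    | nil => intro a; simp [List.Chain]
    | cons x l ih =>
      intro a
      have hset : {φ : ℤ × ℤ → ℝ | List.Chain (EdgeOpen φ ε) a (x :: l)}
          = ({φ | EdgeOpen φ ε a x} ∩ {φ | List.Chain (EdgeOpen φ ε) x l}) := by
        ext φ; simp [List.Chain, List.chain_cons]
      rw [hset]
      refine MeasurableSet.inter ?_ (ih x)
      have h2 : {φ : ℤ × ℤ → ℝ | EdgeOpen φ ε a x}
          = {φ : ℤ × ℤ → ℝ | LatticeAdj a x} ∩ {φ | φ x < φ a + ε} := rfl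
      rw [h2]
      refine MeasurableSet.inter ?_
        (measurableSet_lt (measurable_pi_apply x) (by fun_prop))
      by_cases h : LatticeAdj a x
      · simp [h]
      · simp [h]
  have hdecomp : {φ : ℤ × ℤ → ℝ | Reaches φ ε a b}
      = ⋃ l : List (ℤ × ℤ), {φ | List.Chain (EdgeOpen φ ε) a l ∧
          (a :: l).getLast (List.cons_ne_nil _ _) = b} := by
    ext φ
    simp only [Set.mem_setOf_eq, Set.mem_iUnion]
    constructor
    · intro h
      exact List.exists_isChain_cons_of_relationReflTransGen h
    · rintro ⟨l, h1, h2⟩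
      exact List.relationReflTransGen_of_exists_isChain_cons l h1 h2
  rw [hdecomp]
  refine MeasurableSet.iUnion fun l => ?_
  by_cases h : (a :: l).getLast (List.cons_ne_nil _ _) = b
  · simpa [h] using key l a
  · simp [h]

lemma measurableSet_infinite (p : (ℤ × ℤ → ℝ) → (ℤ × ℤ) → Prop)
    (hp : ∀ b, MeasurableSet {φ | p φ b}) :
    MeasurableSet {φ : ℤ × ℤ → ℝ | {b | p φ b}.Infinite} := by
  classical
  have hset : {φ : ℤ × ℤ → ℝ | {b | p φ b}.Infinite}
      = ⋂ F : Finset (ℤ × ℤ), ⋃ b : ℤ × ℤ, {φ | p φ b ∧ b ∉ F} := by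
    ext φ
    simp only [Set.mem_setOf_eq, Set.mem_iInter, Set.mem_iUnion]
    constructor
    · intro h F
      by_contra hc
      push_neg at hc
      exact h (F.finite_toSet.subset fun b hb => hc b hb)
    · intro h hfin
      obtain ⟨b, hpb, hbF⟩ := h hfin.toFinset
      exact hbF (hfin.mem_toFinset.mpr hpb)
  rw [hset]
  refine MeasurableSet.iInter fun F => MeasurableSet.iUnion fun b => ?_
  by_cases h : b ∈ F
  · simp [h]
  · simpa [h] using hp b

/-- In the Lightning Model (vertex potentials i.i.d. uniform on `[0,1]`), the probability
that infinitely many vertices are reachable from the origin equals the probability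
that infinitely many vertices reach the origin. -/
theorem prob_weakPerc_eq_prob_attract
    (μ : Measure ((ℤ × ℤ) → ℝ)) [IsProbabilityMeasure μ]
    (hindep : ProbabilityTheory.iIndepFun
      (fun (a : ℤ × ℤ) (φ : (ℤ × ℤ) → ℝ) => φ a) μ)
    (hunif : ∀ a : ℤ × ℤ, μ.map (fun φ => φ a) = volume.restrict (Set.Icc (0 : ℝ) 1))
    (ε : ℝ) (hε : ε ∈ Set.Icc (0 : ℝ) 1) :
    μ {φ | {b : ℤ × ℤ | Reaches φ ε 0 b}.Infinite}
      = μ {φ | {b : ℤ × ℤ | Reaches φ ε b 0}.Infinite} := by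
  classical
  set T : ((ℤ × ℤ) → ℝ) → ((ℤ × ℤ) → ℝ) := fun φ a => 1 - φ a with hTdef
  have hTm : Measurable T :=
    measurable_pi_lambda _ fun a => measurable_const.sub (measurable_pi_apply a)
  -- The pushforward of μ under T is again μ, by uniqueness of projective limits.
  have hlim1 : IsProjectiveLimit μ unifP := lm_isProjLimit μ hindep hunif
  have hlim2 : IsProjectiveLimit (μ.map T) unifP := by
    intro I
    have hrm : Measurable (I.restrict : ((ℤ × ℤ) → ℝ) → _) :=
      measurable_pi_lambda _ (fun _ => measurable_pi_apply _)
    set g : (I → ℝ) → (I → ℝ) := fun x i => 1 - x i with hg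
    have hgm : Measurable g :=
      measurable_pi_lambda _ fun i => measurable_const.sub (measurable_pi_apply i)
    have h1 : (μ.map T).map (I.restrict) = (μ.map I.restrict).map g := by
      rw [Measure.map_map hrm hTm, Measure.map_map hgm hrm]
      rfl
    rw [h1, hlim1 I]
    show (unifP I).map g = unifP I
    refine ((Measure.pi_eq fun s hs => ?_)).symm
    have hpre : g ⁻¹' Set.pi Set.univ s
        = Set.pi Set.univ (fun i => (fun x : ℝ => 1 - x) ⁻¹' s i) := by
      ext x
      simp [hg, Set.mem_pi]
    rw [Measure.map_apply hgm (MeasurableSet.univ_pi hs), hpre]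
    rw [show (unifP I : Measure (∀ _ : I, ℝ)) = Measure.pi fun _ => unifM from rfl]
    rw [Measure.pi_pi]
    exact Finset.prod_congr rfl fun i _ => unif_one_sub_preimage (hs i)
  haveI : IsProbabilityMeasure (μ.map T) := Measure.isProbabilityMeasure_map hTm.aemeasurable
  have hmapT : μ.map T = μ := hlim2.unique hlim1
  -- Reversal of open paths under T.
  have hswap : ∀ (φ : (ℤ × ℤ) → ℝ) (x y : ℤ × ℤ), EdgeOpen (T φ) ε x y → EdgeOpen φ ε y x := by
    rintro φ x y ⟨hadj, hlt⟩
    refine ⟨?_, ?_⟩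
    · unfold LatticeAdj at hadj ⊢
      omega
    · simp only [hTdef] at hlt
      linarith
  have hswap' : ∀ (φ : (ℤ × ℤ) → ℝ) (x y : ℤ × ℤ), EdgeOpen φ ε x y → EdgeOpen (T φ) ε y x := by
    rintro φ x y ⟨hadj, hlt⟩
    refine ⟨?_, ?_⟩
    · unfold LatticeAdj at hadj ⊢
      omega
    · simp only [hTdef]
      linarith
  have hmono : ∀ {r r' : (ℤ × ℤ) → (ℤ × ℤ) → Prop},
      (∀ x y, r x y → r' y x) → ∀ {a b}, Relation.ReflTransGen r a b →
        Relation.ReflTransGen r' b a := by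
    intro r r' h a b hab
    induction hab with
    | refl => exact Relation.ReflTransGen.refl
    | tail _ step ih => exact Relation.ReflTransGen.head (h _ _ step) ih
  have hrev : ∀ (φ : (ℤ × ℤ) → ℝ) (b : ℤ × ℤ), Reaches (T φ) ε b 0 ↔ Reaches φ ε 0 b :=
    fun φ b => ⟨fun h => hmono (hswap φ) h, fun h => hmono (hswap' φ) h⟩
  have hsetEq : T ⁻¹' {φ | {b : ℤ × ℤ | Reaches φ ε b 0}.Infinite}
      = {φ | {b : ℤ × ℤ | Reaches φ ε 0 b}.Infinite} := by
    ext φ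
    simp only [Set.mem_preimage, Set.mem_setOf_eq]
    rw [show {b : ℤ × ℤ | Reaches (T φ) ε b 0} = {b : ℤ × ℤ | Reaches φ ε 0 b} from
      Set.ext fun b => hrev φ b]
  have hmeasB : MeasurableSet {φ : ℤ × ℤ → ℝ | {b : ℤ × ℤ | Reaches φ ε b 0}.Infinite} :=
    measurableSet_infinite (fun φ b => Reaches φ ε b 0) (fun b => measurableSet_reaches ε b 0)
  calc μ {φ | {b : ℤ × ℤ | Reaches φ ε 0 b}.Infinite}
      = μ (T ⁻¹' {φ | {b : ℤ × ℤ | Reaches φ ε b 0}.Infinite}) := by rw [hsetEq]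
    _ = (μ.map T) {φ | {b : ℤ × ℤ | Reaches φ ε b 0}.Infinite} :=
        (Measure.map_apply hTm hmeasB).symm
    _ = μ {φ | {b : ℤ × ℤ | Reaches φ ε b 0}.Infinite} := by rw [hmapT]
end

section
/- Fix ε ∈ (0,1), M = ⌈1/ε⌉, s_j = 1 − jε, and the basis functions h_{j,i}(x) = (x − s_{j+1})^i · 1_{I_j}(x). For 0 ≤ j < M−1 and 0 ≤ i ≤ j, the operator L^ε f(x) = ∫_0^{min(x+ε,1)} f(t) dt satisfies L^ε h_{j,i} = (1/(i+1)) ( ∑_{k=0}^{j} ε^{i+1} h_{k,0} + h_{j+1,i+1} ). -/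
/-- `s_j = 1 - jε`. -/
noncomputable def sPt (ε : ℝ) (j : ℕ) : ℝ := 1 - (j : ℝ) * ε

/-- For `M = ⌈1/ε⌉`: `I_j = (s_{j+1}, s_j]` for `j ≤ M-2`, and `I_{M-1} = [0, s_{M-1}]`. -/
noncomputable def Ij (ε : ℝ) (j : ℕ) : Set ℝ :=
  if j = ⌈1 / ε⌉₊ - 1 then Set.Icc 0 (sPt ε (⌈1 / ε⌉₊ - 1))
  else Set.Ioc (sPt ε (j + 1)) (sPt ε j)

/-- The basis functions `h_{j,i}(x) = (x - s_{j+1})^i · 1_{I_j}(x)`. -/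
noncomputable def hBasis (ε : ℝ) (j i : ℕ) (x : ℝ) : ℝ :=
  (x - sPt ε (j + 1)) ^ i * (Ij ε j).indicator (fun _ => (1 : ℝ)) x

/-- The operator `L^ε f(x) = ∫_0^{min(x+ε,1)} f(t) dt`. -/
noncomputable def Lop (ε : ℝ) (f : ℝ → ℝ) (x : ℝ) : ℝ :=
  ∫ t in (0 : ℝ)..(min (x + ε) 1), f t

lemma ind_add_aux (a b c x : ℝ) (hab : a ≤ b) (hbc : b ≤ c) :
    (Set.Ioc b c).indicator (fun _ => (1:ℝ)) x + (Set.Ioc a b).indicator (fun _ => (1:ℝ)) x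
      = (Set.Ioc a c).indicator (fun _ => (1:ℝ)) x := by
  rcases le_or_gt x a with h | h
  · rw [Set.indicator_of_notMem (by simp [Set.mem_Ioc]; intro hh; linarith),
      Set.indicator_of_notMem (by simp [Set.mem_Ioc]; intro hh; linarith),
      Set.indicator_of_notMem (by simp [Set.mem_Ioc]; intro hh; linarith)]
    norm_num
  · rcases le_or_gt x b with h2 | h2
    · rw [Set.indicator_of_notMem (by simp [Set.mem_Ioc]; intro hh; linarith),
        Set.indicator_of_mem (Set.mem_Ioc.mpr ⟨h, h2⟩),
        Set.indicator_of_mem (Set.mem_Ioc.mpr ⟨h, by linarith⟩)]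
      norm_num
    · rcases le_or_gt x c with h3 | h3
      · rw [Set.indicator_of_mem (Set.mem_Ioc.mpr ⟨h2, h3⟩),
          Set.indicator_of_notMem (by simp [Set.mem_Ioc]; intro hh; linarith),
          Set.indicator_of_mem (Set.mem_Ioc.mpr ⟨h, h3⟩)]
        norm_num
      · rw [Set.indicator_of_notMem (by simp [Set.mem_Ioc]; intro hh; linarith),
          Set.indicator_of_notMem (by simp [Set.mem_Ioc]; intro hh; linarith),
          Set.indicator_of_notMem (by simp [Set.mem_Ioc]; intro hh; linarith)]
        norm_num

lemma integral_aux (a b u : ℝ) (i : ℕ) (ha : 0 ≤ a) (hu : 0 ≤ u) :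
    (∫ t in (0:ℝ)..u, (t - a)^i * (Set.Ioc a b).indicator (fun _ => (1:ℝ)) t)
      = (max a (min u b) - a)^(i+1) / ((i:ℝ)+1) := by
  have h1 : (fun t => (t - a)^i * (Set.Ioc a b).indicator (fun _ => (1:ℝ)) t)
      = (Set.Ioc a b).indicator (fun t => (t-a)^i) := by
    funext t; by_cases ht : t ∈ Set.Ioc a b <;> simp [Set.indicator_apply, ht]
  rw [show (∫ t in (0:ℝ)..u, (t - a)^i * (Set.Ioc a b).indicator (fun _ => (1:ℝ)) t)
      = ∫ t in (0:ℝ)..u, (Set.Ioc a b).indicator (fun t => (t-a)^i) t from by rw [← h1],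
    intervalIntegral.integral_of_le hu,
    MeasureTheory.setIntegral_indicator measurableSet_Ioc, Set.Ioc_inter_Ioc,
    max_eq_right ha]
  rcases le_or_gt a (min u b) with h | h
  · rw [← intervalIntegral.integral_of_le h]
    rw [intervalIntegral.integral_comp_sub_right (fun t => t^i) a]
    simp [integral_pow, max_eq_right h]
  · rw [Set.Ioc_eq_empty (not_lt.mpr h.le), max_eq_left h.le]
    simp

lemma sum_ind_aux (ε : ℝ) (hε : 0 < ε) (j : ℕ) (x : ℝ) :
    ∑ k ∈ Finset.range (j+1), (Set.Ioc (sPt ε (k+1)) (sPt ε k)).indicator (fun _ => (1:ℝ)) x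
      = (Set.Ioc (sPt ε (j+1)) 1).indicator (fun _ => (1:ℝ)) x := by
  induction j with
  | zero => simp [sPt]
  | succ n ih =>
    rw [Finset.sum_range_succ, ih]
    exact ind_add_aux _ _ _ x (by simp only [sPt]; push_cast; nlinarith)
      (by simp only [sPt]; push_cast; nlinarith)

/-- For `0 ≤ j < M-1` and `0 ≤ i ≤ j`,
`L^ε h_{j,i} = (1/(i+1)) (∑_{k=0}^{j} ε^{i+1} h_{k,0} + h_{j+1,i+1})` on `[0,1]`. -/
theorem Lop_hBasis_inner (ε : ℝ) (hε : ε ∈ Set.Ioo (0 : ℝ) 1) (j i : ℕ)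
    (hj : j < ⌈1 / ε⌉₊ - 1) (hi : i ≤ j) (x : ℝ) (hx : x ∈ Set.Icc (0 : ℝ) 1) :
    Lop ε (hBasis ε j i) x
      = (1 / ((i : ℝ) + 1)) *
        ((∑ k ∈ Finset.range (j + 1), ε ^ (i + 1) * hBasis ε k 0 x)
          + hBasis ε (j + 1) (i + 1) x) := by
  obtain ⟨hε0, hε1⟩ := hε
  obtain ⟨hx0, hx1⟩ := hx
  have hjne : j ≠ ⌈1 / ε⌉₊ - 1 := by omega
  have hceil : (⌈1 / ε⌉₊ : ℝ) < 1 / ε + 1 := Nat.ceil_lt_add_one (by positivity)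
  have hle : (1:ℝ) / ε ≤ (⌈1 / ε⌉₊ : ℝ) := Nat.le_ceil _
  have hinv : ε * (1 / ε) = 1 := by field_simp
  have hjM : (j : ℝ) + 2 ≤ (⌈1 / ε⌉₊ : ℝ) := by
    have : j + 2 ≤ ⌈1 / ε⌉₊ := by omega
    exact_mod_cast this
  have ha0 : 0 < sPt ε (j + 1) := by
    simp only [sPt]; push_cast; nlinarith
  have hb1 : sPt ε j ≤ 1 := by
    simp only [sPt]; nlinarith [Nat.cast_nonneg (α := ℝ) j]
  have hbb : sPt ε j = sPt ε (j + 1) + ε := by simp only [sPt]; push_cast; ring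
  have hs2 : sPt ε (j + 2) = sPt ε (j + 1) - ε := by simp only [sPt]; push_cast; ring
  -- LHS
  have hLHS : Lop ε (hBasis ε j i) x
      = (max (sPt ε (j+1)) (min (min (x+ε) 1) (sPt ε j)) - sPt ε (j+1))^(i+1) / ((i:ℝ)+1) := by
    have hIj : Ij ε j = Set.Ioc (sPt ε (j + 1)) (sPt ε j) := by
      simp only [Ij, if_neg hjne]
    simp only [Lop, hBasis, hIj]
    exact integral_aux _ _ _ i ha0.le (le_min (by linarith) zero_le_one)
  -- h_{j+1,i+1} helper
  have hH : hBasis ε (j + 1) (i + 1) x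
      = if sPt ε (j + 2) ≤ x ∧ x ≤ sPt ε (j + 1) then (x - sPt ε (j + 2))^(i+1) else 0 := by
    have harg : j + 1 + 1 = j + 2 := rfl
    by_cases hc : j + 1 = ⌈1 / ε⌉₊ - 1
    · have hM : j + 2 = ⌈1 / ε⌉₊ := by omega
      have hMr : ((j:ℝ) + 2) = (⌈1 / ε⌉₊ : ℝ) := by exact_mod_cast congrArg (Nat.cast (R := ℝ)) hM
      have hsM : sPt ε (j + 2) ≤ 0 := by
        simp only [sPt]; push_cast
        nlinarith [mul_le_mul_of_nonneg_left hle hε0.le, hinv, hMr]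
      simp only [hBasis, Ij, harg, ← hc, eq_self_iff_true, if_true]
      by_cases hxm : x ≤ sPt ε (j + 1)
      · rw [Set.indicator_of_mem (Set.mem_Icc.mpr ⟨hx0, hxm⟩),
          if_pos ⟨by linarith, hxm⟩, mul_one]
      · rw [Set.indicator_of_notMem (by simp [Set.mem_Icc]; intro _; linarith),
          if_neg (by intro hh; exact hxm hh.2), mul_zero]
    · simp only [hBasis, Ij, if_neg hc, harg]
      by_cases hxm : x ∈ Set.Ioc (sPt ε (j + 2)) (sPt ε (j + 1))
      · rw [Set.indicator_of_mem hxm, if_pos ⟨hxm.1.le, hxm.2⟩, mul_one]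
      · rw [Set.indicator_of_notMem hxm, mul_zero]
        by_cases hcond : sPt ε (j + 2) ≤ x ∧ x ≤ sPt ε (j + 1)
        · rw [if_pos hcond]
          have hx2 : x = sPt ε (j + 2) := by
            rcases lt_or_eq_of_le hcond.1 with h | h
            · exact absurd ⟨h, hcond.2⟩ hxm
            · exact h.symm
          simp [hx2]
        · rw [if_neg hcond]
    -- sum helper
  have hSum : ∑ k ∈ Finset.range (j + 1), ε ^ (i + 1) * hBasis ε k 0 x
      = ε ^ (i + 1) * (Set.Ioc (sPt ε (j + 1)) 1).indicator (fun _ => (1:ℝ)) x := by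
    rw [← Finset.mul_sum]
    congr 1
    rw [← sum_ind_aux ε hε0 j x]
    refine Finset.sum_congr rfl fun k hk => ?_
    have hkne : k ≠ ⌈1 / ε⌉₊ - 1 := by
      simp only [Finset.mem_range] at hk; omega
    simp only [hBasis, Ij, if_neg hkne, pow_zero, one_mul]
  rw [hLHS, hSum, hH]
  have hip : ((i:ℝ) + 1) ≠ 0 := by positivity
  rcases le_or_gt x (sPt ε (j + 1)) with hxa | hxa
  · rw [Set.indicator_of_notMem (by simp [Set.mem_Ioc]; intro hh; linarith)]
    rcases le_or_gt (sPt ε (j + 2)) x with hxs | hxs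
    · rw [if_pos ⟨hxs, hxa⟩]
      have h1 : min (x + ε) 1 = x + ε := min_eq_left (by linarith)
      have h2 : min (x + ε) (sPt ε j) = x + ε := min_eq_left (by linarith)
      have h3 : max (sPt ε (j + 1)) (x + ε) = x + ε := max_eq_right (by linarith)
      rw [h1, h2, h3, hs2]
      rw [show x + ε - sPt ε (j + 1) = x - (sPt ε (j + 1) - ε) from by ring]
      field_simp
      ring
    · rw [if_neg (by intro hh; linarith [hh.1])]
      have h3 : min (min (x + ε) 1) (sPt ε j) ≤ sPt ε (j + 1) := by
        calc min (min (x + ε) 1) (sPt ε j) ≤ min (x + ε) 1 := min_le_left _ _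
          _ ≤ x + ε := min_le_left _ _
          _ ≤ sPt ε (j + 1) := by linarith
      rw [max_eq_left h3]
      simp
  · rw [Set.indicator_of_mem (Set.mem_Ioc.mpr ⟨hxa, hx1⟩),
      if_neg (by intro hh; linarith [hh.2])]
    have h2 : min (min (x + ε) 1) (sPt ε j) = sPt ε j :=
      min_eq_right (le_min (by linarith) hb1)
    rw [h2, hbb, max_eq_right (by linarith)]
    have : sPt ε (j + 1) + ε - sPt ε (j + 1) = ε := by ring
    rw [this]
    field_simp
    ring
end

section
/- With notation as above, for the outermost interval case j = M−1: L^ε h_{M−1,i} is the constant function (ε^{i+1} − (Mε−1)^{i+1})/(i+1) on [0,1], i.e., equals that constant times ∑_{k=0}^{M−1} h_{k,0}. -/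
lemma sum_hzero (ε : ℝ) (hε : ε ∈ Set.Ioo (0 : ℝ) 1) (x : ℝ) (hx : x ∈ Set.Icc (0 : ℝ) 1) :
    ∑ k ∈ Finset.range ⌈1 / ε⌉₊, hBasis ε k 0 x = 1 := by
  obtain ⟨hε0, hε1⟩ := hε
  obtain ⟨hx0, hx1⟩ := hx
  set M := ⌈1 / ε⌉₊ with hM
  have hM1 : 1 ≤ M := Nat.one_le_iff_ne_zero.mpr (by
    simp only [hM, ne_eq, Nat.ceil_eq_zero, not_le]
    positivity)
  have hcast : ((M - 1 : ℕ) : ℝ) = (M : ℝ) - 1 := by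
    rw [Nat.cast_sub hM1]; norm_num
  have hMε : 1 ≤ (M : ℝ) * ε := by
    have := Nat.le_ceil (1 / ε)
    rw [div_le_iff₀ hε0] at this
    linarith
  have hM1ε : ((M : ℝ) - 1) * ε < 1 := by
    have h2 : (M : ℝ) < 1 / ε + 1 := Nat.ceil_lt_add_one (by positivity)
    have h3 : ((M : ℝ) - 1) < 1 / ε := by linarith
    calc ((M : ℝ) - 1) * ε < (1 / ε) * ε := by nlinarith
    _ = 1 := by field_simp
  have hsimp : ∀ k, hBasis ε k 0 x = (Ij ε k).indicator (fun _ => (1 : ℝ)) x := by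
    intro k; simp [hBasis]
  have hsdec : ∀ a b : ℕ, a ≤ b → sPt ε b ≤ sPt ε a := by
    intro a b hab
    unfold sPt
    have : (a : ℝ) ≤ b := by exact_mod_cast hab
    nlinarith
  by_cases hcase : x ≤ sPt ε (M - 1)
  · rw [Finset.sum_eq_single_of_mem (M - 1)
      (Finset.mem_range.mpr (Nat.sub_lt hM1 one_pos))]
    · rw [hsimp, Set.indicator_of_mem]
      rw [Ij, if_pos rfl]
      exact ⟨hx0, hcase⟩
    · intro k hk hkne
      rw [hsimp, Set.indicator_of_notMem]
      rw [Ij, if_neg hkne]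
      have hklt : k < M - 1 := lt_of_le_of_ne (Nat.le_sub_one_of_lt (Finset.mem_range.mp hk)) hkne
      have hk1 : k + 1 ≤ M - 1 := hklt
      intro hmem
      have := hsdec (k + 1) (M - 1) hk1
      exact absurd hmem.1 (not_lt.mpr (le_trans hcase this))
  · push_neg at hcase
    set n := ⌊(1 - x) / ε⌋₊ with hn
    have hx1' : 0 ≤ (1 - x) / ε := div_nonneg (by linarith) hε0.le
    have hnle : (n : ℝ) * ε ≤ 1 - x := by
      have := Nat.floor_le hx1'
      calc (n : ℝ) * ε ≤ ((1 - x) / ε) * ε := by nlinarith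
      _ = 1 - x := by field_simp
    have hnlt : 1 - x < ((n : ℝ) + 1) * ε := by
      have := Nat.lt_floor_add_one ((1 - x) / ε)
      calc 1 - x = ((1 - x) / ε) * ε := by field_simp
      _ < ((n : ℝ) + 1) * ε := by nlinarith
    have hnM : n < M - 1 := by
      have h1 : 1 - x < ((M : ℝ) - 1) * ε := by
        unfold sPt at hcase; rw [hcast] at hcase; linarith
      have h2 : (1 - x) / ε < ((M - 1 : ℕ) : ℝ) := by
        rw [hcast, div_lt_iff₀ hε0]; linarith
      exact Nat.floor_lt hx1' |>.mpr h2
    have hne : n ≠ M - 1 := Nat.ne_of_lt hnM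
    rw [Finset.sum_eq_single_of_mem n
      (Finset.mem_range.mpr (lt_of_lt_of_le hnM (Nat.sub_le M 1)))]
    · rw [hsimp, Set.indicator_of_mem]
      rw [Ij, if_neg hne]
      constructor
      · unfold sPt; push_cast; linarith
      · unfold sPt; linarith
    · intro k hk hkne
      rw [hsimp, Set.indicator_of_notMem]
      rcases eq_or_ne k (M - 1) with hkM | hkM
      · rw [Ij, if_pos hkM, ← hM]
        intro hmem
        exact absurd hmem.2 (not_le.mpr hcase)
      · rw [Ij, if_neg hkM]
        intro hmem
        rcases lt_or_gt_of_ne hkne with h | h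
        · have hk1 : k + 1 ≤ n := h
          have : ((k : ℝ) + 1) * ε ≤ (n : ℝ) * ε := by
            have : ((k : ℝ) + 1) ≤ n := by exact_mod_cast hk1
            nlinarith
          have hxle : x ≤ sPt ε (k + 1) := by unfold sPt; push_cast; linarith
          exact absurd hmem.1 (not_lt.mpr hxle)
        · have hk1 : n + 1 ≤ k := h
          have : ((n : ℝ) + 1) * ε ≤ (k : ℝ) * ε := by
            have : ((n : ℝ) + 1) ≤ k := by exact_mod_cast hk1
            nlinarith
          have : sPt ε k ≤ sPt ε (n + 1) := by unfold sPt; push_cast; linarith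
          have hxgt : sPt ε k < x := by
            unfold sPt at this ⊢; push_cast at this ⊢; linarith
          exact absurd hmem.2 (not_le.mpr hxgt)

/-- Outermost case `j = M-1`: `L^ε h_{M-1,i}` is the constant
`(ε^{i+1} - (Mε-1)^{i+1})/(i+1)` on `[0,1]`, i.e. that constant times `∑_{k=0}^{M-1} h_{k,0}`. -/
theorem Lop_hBasis_outer (ε : ℝ) (hε : ε ∈ Set.Ioo (0 : ℝ) 1) (i : ℕ)
    (hi : i ≤ ⌈1 / ε⌉₊ - 1) (x : ℝ) (hx : x ∈ Set.Icc (0 : ℝ) 1) :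
    Lop ε (hBasis ε (⌈1 / ε⌉₊ - 1) i) x
      = ((ε ^ (i + 1) - ((⌈1 / ε⌉₊ : ℝ) * ε - 1) ^ (i + 1)) / ((i : ℝ) + 1)) *
        ∑ k ∈ Finset.range ⌈1 / ε⌉₊, hBasis ε k 0 x := by
  obtain ⟨hε0, hε1⟩ := hε
  obtain ⟨hx0, hx1⟩ := hx
  rw [sum_hzero ε ⟨hε0, hε1⟩ x ⟨hx0, hx1⟩, mul_one]
  set M := ⌈1 / ε⌉₊ with hM
  have hM1 : 1 ≤ M := Nat.one_le_iff_ne_zero.mpr (by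
    simp only [hM, ne_eq, Nat.ceil_eq_zero, not_le]
    positivity)
  have hcast : ((M - 1 : ℕ) : ℝ) = (M : ℝ) - 1 := by
    rw [Nat.cast_sub hM1]; norm_num
  have hsub1 : M - 1 + 1 = M := Nat.succ_pred_eq_of_pos hM1
  have hMε : 1 ≤ (M : ℝ) * ε := by
    have := Nat.le_ceil (1 / ε)
    rw [div_le_iff₀ hε0] at this
    linarith
  have hM1ε : ((M : ℝ) - 1) * ε < 1 := by
    have h2 : (M : ℝ) < 1 / ε + 1 := Nat.ceil_lt_add_one (by positivity)
    have h3 : ((M : ℝ) - 1) < 1 / ε := by linarith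
    calc ((M : ℝ) - 1) * ε < (1 / ε) * ε := by nlinarith
    _ = 1 := by field_simp
  set s : ℝ := sPt ε (M - 1) with hs
  set c : ℝ := sPt ε M with hc
  have hsval : s = 1 - ((M : ℝ) - 1) * ε := by rw [hs]; unfold sPt; rw [hcast]
  have hcval : c = 1 - (M : ℝ) * ε := rfl
  have hs0 : 0 ≤ s := by rw [hsval]; linarith
  have hsε : s ≤ ε := by rw [hsval]; nlinarith
  set U : ℝ := min (x + ε) 1 with hU
  have hsU : s ≤ U := le_min (by linarith) (by rw [hsval]; nlinarith [mul_nonneg (by linarith : (0:ℝ) ≤ (M:ℝ) - 1) hε0.le])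
  have hIj : Ij ε (M - 1) = Set.Icc 0 s := by rw [Ij, if_pos rfl]
  have hfun : ∀ t ∈ Set.uIcc (0 : ℝ) U,
      hBasis ε (M - 1) i t = Set.indicator {y : ℝ | y ≤ s} (fun t => (t - c) ^ i) t := by
    intro t ht
    rw [Set.uIcc_of_le (le_trans hs0 hsU)] at ht
    rw [hBasis, hsub1, hIj, ← hc]
    by_cases h : t ≤ s
    · rw [Set.indicator_of_mem (Set.mem_Icc.mpr ⟨ht.1, h⟩), Set.indicator_of_mem (show t ∈ {y : ℝ | y ≤ s} from h), mul_one]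
    · rw [Set.indicator_of_notMem (by simp [h]), Set.indicator_of_notMem (show t ∉ {y : ℝ | y ≤ s} from h), mul_zero]
  rw [Lop, ← hU, intervalIntegral.integral_congr hfun,
    intervalIntegral.integral_indicator ⟨hs0, hsU⟩]
  have := intervalIntegral.integral_comp_sub_right (a := (0:ℝ)) (b := s)
    (fun u => u ^ i) c
  rw [this, integral_pow]
  have h1 : s - c = ε := by rw [hsval, hcval]; ring
  have h2 : (0 : ℝ) - c = (M : ℝ) * ε - 1 := by rw [hcval]; ring
  rw [h1, h2]
end

section
/- The finite-dimensional space F^ε = { f : [0,1] → ℝ : the restriction of f to each I_j is a polynomial of degree ≤ j } is invariant under the operator L^ε f(x) = ∫_0^{min(x+ε,1)} f(t) dt. -/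
/-- Membership in `F^ε`: the restriction of `f` to each `I_j` is a polynomial of
degree at most `j`. -/
def MemFspace (ε : ℝ) (f : ℝ → ℝ) : Prop :=
  ∀ j < ⌈1 / ε⌉₊, ∃ p : Polynomial ℝ, p.natDegree ≤ j ∧ ∀ x ∈ Ij ε j, f x = p.eval x

/-- Every real polynomial has a polynomial antiderivative of one higher degree. -/
lemma antideriv (p : Polynomial ℝ) :
    ∃ q : Polynomial ℝ, q.natDegree ≤ p.natDegree + 1 ∧ q.derivative = p := by
  refine ⟨p.sum fun n c => Polynomial.C (c / (n + 1)) * Polynomial.X ^ (n + 1), ?_, ?_⟩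
  · apply Polynomial.natDegree_sum_le_of_forall_le
    intro i hi
    refine le_trans (Polynomial.natDegree_C_mul_X_pow_le _ _) ?_
    have := Polynomial.le_natDegree_of_mem_supp i hi
    omega
  · rw [Polynomial.sum, Polynomial.derivative_sum]
    conv_rhs => rw [← Polynomial.sum_C_mul_X_pow_eq p]
    rw [Polynomial.sum]
    apply Finset.sum_congr rfl
    intro n _
    rw [Polynomial.derivative_C_mul_X_pow]
    have hne : ((n : ℝ) + 1) ≠ 0 := by positivity
    congr 1
    push_cast
    rw [div_mul_cancel₀ _ hne]

/-- FTC for polynomials. -/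
lemma poly_ftc (q : Polynomial ℝ) (a b : ℝ) :
    ∫ x in a..b, q.derivative.eval x = q.eval b - q.eval a :=
  intervalIntegral.integral_eq_sub_of_hasDerivAt (fun x _ => q.hasDerivAt x)
    ((q.derivative.continuous_aeval).intervalIntegrable a b)

/-- The space `F^ε` of piecewise polynomials (degree `≤ j` on `I_j`) is invariant
under `L^ε`. -/
theorem Fspace_invariant (ε : ℝ) (hε : ε ∈ Set.Ioo (0 : ℝ) 1) (f : ℝ → ℝ)
    (hf : MemFspace ε f) : MemFspace ε (Lop ε f) := by
  obtain ⟨hε0, hε1⟩ := hε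
  set M := ⌈1 / ε⌉₊ with hMdef
  have hM : 2 ≤ M := by
    have h1 : (1 : ℝ) < 1 / ε := by rw [lt_div_iff₀ hε0]; linarith
    have h2 : (1 : ℕ) < ⌈1 / ε⌉₊ := Nat.lt_ceil.mpr (by exact_mod_cast h1)
    omega
  have hMε : (1 : ℝ) ≤ (M : ℝ) * ε := by
    have h := Nat.le_ceil (1 / ε)
    rw [← hMdef] at h
    calc (1 : ℝ) = (1 / ε) * ε := by field_simp
    _ ≤ (M : ℝ) * ε := by nlinarith
  have hspos : ∀ k, k ≤ M - 1 → 0 < sPt ε k := by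
    intro k hk
    have h1 : ((M - 1 : ℕ) : ℝ) < 1 / ε := Nat.lt_ceil.mp (by omega)
    have h2 : (k : ℝ) ≤ ((M - 1 : ℕ) : ℝ) := by exact_mod_cast hk
    have h3 : ((M - 1 : ℕ) : ℝ) * ε < 1 := by
      rw [← div_mul_cancel₀ (1 : ℝ) (ne_of_gt hε0)]
      exact mul_lt_mul_of_pos_right h1 hε0
    have h4 : (k : ℝ) * ε ≤ ((M - 1 : ℕ) : ℝ) * ε := mul_le_mul_of_nonneg_right h2 hε0.le
    unfold sPt; linarith
  have hmono : ∀ k : ℕ, sPt ε (k + 1) = sPt ε k - ε := by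
    intro k; unfold sPt; push_cast; ring
  -- integrability of f on [0, s_j]
  have key : ∀ i, i ≤ M - 1 →
      MeasureTheory.IntegrableOn f (Set.Icc 0 (sPt ε (M - 1 - i))) MeasureTheory.volume := by
    intro i
    induction i with
    | zero =>
      intro _
      obtain ⟨p, _, hp⟩ := hf (M - 1) (by omega)
      have hIj : Ij ε (M - 1) = Set.Icc 0 (sPt ε (M - 1)) := by
        rw [Ij, ← hMdef, if_pos rfl]
      have hcont : MeasureTheory.IntegrableOn (fun x => p.eval x)
          (Set.Icc 0 (sPt ε (M - 1))) MeasureTheory.volume :=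
        (p.continuous_aeval.continuousOn).integrableOn_Icc
      simpa using hcont.congr_fun (fun x hx => (hp x (hIj ▸ hx)).symm) measurableSet_Icc
    | succ n ih =>
      intro hn
      have hjne : M - 1 - (n + 1) ≠ M - 1 := by omega
      set j := M - 1 - (n + 1) with hjdef
      have hj1 : j + 1 = M - 1 - n := by omega
      have h0 : (0 : ℝ) ≤ sPt ε (j + 1) := le_of_lt (hspos _ (by omega))
      have h1 : sPt ε (j + 1) ≤ sPt ε j := by rw [hmono]; linarith
      rw [← Set.Icc_union_Ioc_eq_Icc h0 h1]
      apply MeasureTheory.IntegrableOn.union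
      · rw [hj1]; exact ih (by omega)
      · obtain ⟨p, _, hp⟩ := hf j (by omega)
        have hIj : Ij ε j = Set.Ioc (sPt ε (j + 1)) (sPt ε j) := by
          rw [Ij, ← hMdef, if_neg hjne]
        have hcont : MeasureTheory.IntegrableOn (fun x => p.eval x)
            (Set.Ioc (sPt ε (j + 1)) (sPt ε j)) MeasureTheory.volume :=
          ((p.continuous_aeval.continuousOn).integrableOn_Icc).mono_set Set.Ioc_subset_Icc_self
        exact hcont.congr_fun (fun x hx => (hp x (hIj ▸ hx)).symm) measurableSet_Ioc
  have integr : ∀ j, j ≤ M - 1 →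
      MeasureTheory.IntegrableOn f (Set.Icc 0 (sPt ε j)) MeasureTheory.volume := by
    intro j hj
    have h := key (M - 1 - j) (by omega)
    rwa [show M - 1 - (M - 1 - j) = j from by omega] at h
  intro j hjM
  rw [← hMdef] at hjM
  rcases Nat.eq_zero_or_pos j with hj0 | hj1
  · -- j = 0 : the integral is constant on I_0
    subst hj0
    refine ⟨Polynomial.C (∫ t in (0 : ℝ)..1, f t), by simp, ?_⟩
    intro x hx
    rw [Ij, ← hMdef, if_neg (by omega : (0 : ℕ) ≠ M - 1)] at hx
    have hx1 : sPt ε 1 < x := hx.1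
    have hgt : (1 : ℝ) ≤ x + ε := by unfold sPt at hx1; push_cast at hx1; linarith
    rw [Lop, min_eq_right hgt]
    simp
  · -- j ≥ 1
    obtain ⟨p, hpdeg, hp⟩ := hf (j - 1) (by omega)
    obtain ⟨q, hqdeg, hqder⟩ := antideriv p
    have hqj : q.natDegree ≤ j := le_trans hqdeg (by omega)
    refine ⟨Polynomial.C ((∫ t in (0 : ℝ)..(sPt ε j), f t) - q.eval (sPt ε j)) +
        q.comp (Polynomial.X + Polynomial.C ε), ?_, ?_⟩
    · refine le_trans (Polynomial.natDegree_add_le _ _) ?_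
      simp [Polynomial.natDegree_comp, Polynomial.natDegree_X_add_C]
      exact hqj
    · intro x hx
      have hxb : sPt ε (j + 1) ≤ x ∧ x ≤ sPt ε j := by
        rw [Ij, ← hMdef] at hx
        by_cases hc : j = M - 1
        · rw [if_pos hc] at hx
          refine ⟨?_, by rw [hc]; exact hx.2⟩
          have hj1M : j + 1 = M := by omega
          have hle0 : sPt ε (j + 1) ≤ 0 := by rw [hj1M]; unfold sPt; linarith
          linarith [hx.1]
        · rw [if_neg hc] at hx
          exact ⟨le_of_lt hx.1, hx.2⟩
      have hle1 : sPt ε j ≤ x + ε := by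
        have := hmono j
        linarith [hxb.1]
      have hle2 : x + ε ≤ sPt ε (j - 1) := by
        have h := hmono (j - 1)
        rw [show j - 1 + 1 = j from by omega] at h
        linarith [hxb.2]
      have hle3 : sPt ε (j - 1) ≤ 1 := by
        have : (0 : ℝ) ≤ ((j - 1 : ℕ) : ℝ) * ε := by positivity
        unfold sPt; linarith
      have h0sj : 0 < sPt ε j := hspos j (by omega)
      rw [Lop, min_eq_left (by linarith : x + ε ≤ 1)]
      have hint1 : IntervalIntegrable f MeasureTheory.volume 0 (sPt ε j) := by
        apply MeasureTheory.IntegrableOn.intervalIntegrable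
        rw [Set.uIcc_of_le (le_of_lt h0sj)]
        exact integr j (by omega)
      have hint2 : IntervalIntegrable f MeasureTheory.volume (sPt ε j) (x + ε) := by
        apply MeasureTheory.IntegrableOn.intervalIntegrable
        rw [Set.uIcc_of_le hle1]
        exact (integr (j - 1) (by omega)).mono_set
          (Set.Icc_subset_Icc (le_of_lt h0sj) hle2)
      rw [← intervalIntegral.integral_add_adjacent_intervals hint1 hint2]
      have hIj1 : Ij ε (j - 1) = Set.Ioc (sPt ε j) (sPt ε (j - 1)) := by
        rw [Ij, ← hMdef, if_neg (by omega : j - 1 ≠ M - 1),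
          show j - 1 + 1 = j from by omega]
      have heq : (∫ t in (sPt ε j)..(x + ε), f t) = ∫ t in (sPt ε j)..(x + ε), p.eval t := by
        rw [intervalIntegral.integral_of_le hle1, intervalIntegral.integral_of_le hle1]
        apply MeasureTheory.setIntegral_congr_fun measurableSet_Ioc
        intro t ht
        exact hp t (hIj1 ▸ ⟨ht.1, le_trans ht.2 hle2⟩)
      rw [heq, ← hqder, poly_ftc]
      simp [Polynomial.eval_comp]
      ring
end

section
/- If ε > p_site, the critical probability for site percolation on ℤ², then the Lightning Model strongly percolates with positive probability: the origin's strongly connected cluster is infinite with positive probability. -/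
open MeasureTheory

/-- Strong percolation: the strongly connected cluster of the origin is infinite. -/
def StrongPerc (φ : ℤ × ℤ → ℝ) (ε : ℝ) : Prop :=
  {b : ℤ × ℤ | Reaches φ ε 0 b ∧ Reaches φ ε b 0}.Infinite

/-- Undirected connectivity within a set `S` of open sites. -/
def SiteConn (S : Set (ℤ × ℤ)) (a b : ℤ × ℤ) : Prop :=
  Relation.ReflTransGen (fun u v => u ∈ S ∧ v ∈ S ∧ LatticeAdj u v) a b

/-- The origin's cluster in Bernoulli site percolation at parameter `p` (realized by
declaring `a` open iff `φ a > 1 - p`, so sites are open i.i.d. with probability `p`)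
is infinite. -/
def SitePerc (φ : ℤ × ℤ → ℝ) (p : ℝ) : Prop :=
  {b : ℤ × ℤ | SiteConn {a : ℤ × ℤ | 1 - p < φ a} 0 b}.Infinite

/-- The critical probability of Bernoulli site percolation on `ℤ²` (with respect to the
i.i.d. uniform coupling `μ`). -/
noncomputable def pSite (μ : Measure ((ℤ × ℤ) → ℝ)) : ℝ :=
  sInf {p : ℝ | 0 ≤ p ∧ p ≤ 1 ∧ 0 < μ {φ | SitePerc φ p}}

lemma LatticeAdj.symm' {a b : ℤ × ℤ} (h : LatticeAdj a b) : LatticeAdj b a := by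
  unfold LatticeAdj at *
  omega

/-- On the event that all potentials are at most `1`, an undirected cluster of
`{a | φ a > 1 - ε}` lies in a single strongly connected component. -/
lemma conn_to_strong {φ : ℤ × ℤ → ℝ} {ε : ℝ} (hle : ∀ a, φ a ≤ 1)
    {u b : ℤ × ℤ} (h : SiteConn {a : ℤ × ℤ | 1 - ε < φ a} u b) :
    Reaches φ ε u b ∧ Reaches φ ε b u := by
  induction h with
  | refl => exact ⟨.refl, .refl⟩
  | tail hcb hstep ih =>
    obtain ⟨hc, hb, hadj⟩ := hstep
    have e1 : EdgeOpen φ ε _ _ := ⟨hadj, lt_of_le_of_lt (hle _) (by linarith [hc.out])⟩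
    have e2 : EdgeOpen φ ε _ _ := ⟨hadj.symm', lt_of_le_of_lt (hle _) (by linarith [hb.out])⟩
    exact ⟨ih.1.tail e1, Relation.ReflTransGen.head e2 ih.2⟩

lemma conn_axis {S : Set (ℤ × ℤ)} (hS : ∀ a, a ∈ S) (n : ℕ) :
    SiteConn S 0 ((n : ℤ), 0) := by
  induction n with
  | zero => exact .refl
  | succ n ih =>
    refine ih.tail ⟨hS _, hS _, ?_⟩
    show ((n : ℤ) - ((n : ℤ) + 1)).natAbs + ((0 : ℤ) - 0).natAbs = 1
    norm_num

section
variable (μ : Measure ((ℤ × ℤ) → ℝ))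
  (hunif : ∀ a : ℤ × ℤ, μ.map (fun φ => φ a) = volume.restrict (Set.Icc (0 : ℝ) 1))

include hunif in
lemma eval_mem_null (s : Set ℝ) (hs : MeasurableSet s)
    (h0 : volume.restrict (Set.Icc (0 : ℝ) 1) s = 0) (a : ℤ × ℤ) :
    μ {φ : (ℤ × ℤ) → ℝ | φ a ∈ s} = 0 := by
  have : μ {φ : (ℤ × ℤ) → ℝ | φ a ∈ s} = (μ.map (fun φ => φ a)) s := by
    rw [Measure.map_apply (measurable_pi_apply a) hs]; rfl
  rw [this, hunif a, h0]

include hunif in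
lemma null_gt_one : μ (⋃ a : ℤ × ℤ, {φ : (ℤ × ℤ) → ℝ | 1 < φ a}) = 0 := by
  refine measure_iUnion_null fun a => eval_mem_null μ hunif (Set.Ioi 1) measurableSet_Ioi ?_ a
  rw [Measure.restrict_apply measurableSet_Ioi]
  have : Set.Ioi (1:ℝ) ∩ Set.Icc 0 1 = ∅ := by
    ext x; simp; intro h h1; linarith
  rw [this]; exact measure_empty

include hunif in
lemma null_le_zero : μ (⋃ a : ℤ × ℤ, {φ : (ℤ × ℤ) → ℝ | φ a ≤ 0}) = 0 := by
  refine measure_iUnion_null fun a => eval_mem_null μ hunif (Set.Iic 0) measurableSet_Iic ?_ a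
  rw [Measure.restrict_apply measurableSet_Iic]
  have : Set.Iic (0:ℝ) ∩ Set.Icc 0 1 = {0} := by
    ext x; simp; constructor
    · rintro ⟨h1, h2, h3⟩; linarith
    · rintro rfl; norm_num
  rw [this]; exact Real.volume_singleton
end

/-- If `ε` exceeds the critical probability for site percolation on `ℤ²`, then the
Lightning Model strongly percolates with positive probability. -/
theorem strongPerc_of_gt_pSite
    (μ : Measure ((ℤ × ℤ) → ℝ)) [IsProbabilityMeasure μ]
    (hindep : ProbabilityTheory.iIndepFun
      (fun a φ => φ a) μ)
    (hunif : ∀ a : ℤ × ℤ, μ.map (fun φ => φ a) = volume.restrict (Set.Icc (0 : ℝ) 1))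
    (ε : ℝ) (hε1 : ε ≤ 1) (hε : pSite μ < ε) :
    0 < μ {φ | StrongPerc φ ε} := by
  -- measurable null/full sets
  set N : Set ((ℤ × ℤ) → ℝ) := ⋃ a : ℤ × ℤ, {φ | φ a ≤ 0} with hN
  set B : Set ((ℤ × ℤ) → ℝ) := ⋃ a : ℤ × ℤ, {φ | 1 < φ a} with hB
  have hNnull : μ N = 0 := null_le_zero μ hunif
  have hBnull : μ B = 0 := null_gt_one μ hunif
  -- the set defining pSite is nonempty: p = 1 works
  have h1mem : (1 : ℝ) ∈ {p : ℝ | 0 ≤ p ∧ p ≤ 1 ∧ 0 < μ {φ | SitePerc φ p}} := by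
    refine ⟨zero_le_one, le_refl 1, ?_⟩
    have hsub : Nᶜ ⊆ {φ | SitePerc φ 1} := by
      intro φ hφ
      have hpos : ∀ a, 0 < φ a := by
        intro a
        by_contra hcon
        exact hφ (Set.mem_iUnion.mpr ⟨a, by push_neg at hcon; exact hcon⟩)
      have hall : ∀ a : ℤ × ℤ, a ∈ {a : ℤ × ℤ | 1 - 1 < φ a} := by
        intro a; simpa using hpos a
      refine Set.infinite_of_injective_forall_mem
        (f := fun n : ℕ => (((n : ℤ), 0) : ℤ × ℤ)) ?_ ?_
      · intro m n hmn
        simpa using congrArg Prod.fst hmn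
      · intro n
        exact conn_axis hall n
    have : μ Nᶜ = 1 := by
      have hmeas : MeasurableSet N :=
        MeasurableSet.iUnion fun a => measurableSet_le (measurable_pi_apply a) measurable_const
      rw [measure_compl hmeas (measure_ne_top μ N), hNnull, measure_univ]
      simp
    calc (0 : ENNReal) < 1 := zero_lt_one
      _ = μ Nᶜ := this.symm
      _ ≤ μ {φ | SitePerc φ 1} := measure_mono hsub
  -- extract p < ε with positive site percolation probability
  obtain ⟨p, ⟨hp0, hp1, hppos⟩, hpε⟩ :=
    exists_lt_of_csInf_lt ⟨1, h1mem⟩ hε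
  -- on Bᶜ, site percolation at p implies strong percolation at ε
  have hsub : {φ | SitePerc φ p} ∩ Bᶜ ⊆ {φ | StrongPerc φ ε} := by
    rintro φ ⟨hperc, hφB⟩
    have hle : ∀ a, φ a ≤ 1 := by
      intro a
      by_contra hcon
      exact hφB (Set.mem_iUnion.mpr ⟨a, by push_neg at hcon; exact hcon⟩)
    refine Set.Infinite.mono ?_ hperc
    intro b hb
    have hb' : SiteConn {a : ℤ × ℤ | 1 - ε < φ a} 0 b := by
      refine Relation.ReflTransGen.mono ?_ _ _ hb
      rintro u v ⟨hu, hv, hadj⟩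
      exact ⟨by simp only [Set.mem_setOf_eq] at *; linarith,
        by simp only [Set.mem_setOf_eq] at *; linarith, hadj⟩
    exact conn_to_strong hle hb'
  -- conclude
  have hBc : MeasurableSet Bᶜ :=
    (MeasurableSet.iUnion fun a =>
      measurableSet_lt measurable_const (measurable_pi_apply a)).compl
  have key : 0 < μ ({φ | SitePerc φ p} ∩ Bᶜ) := by
    by_contra hcon
    push_neg at hcon
    have h0 : μ ({φ | SitePerc φ p} ∩ Bᶜ) = 0 := le_antisymm hcon zero_le
    have := measure_le_inter_add_diff μ {φ | SitePerc φ p} Bᶜ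
    have hdiff : μ ({φ | SitePerc φ p} \ Bᶜ) = 0 := by
      refine le_antisymm ?_ zero_le
      calc μ ({φ | SitePerc φ p} \ Bᶜ) ≤ μ B := measure_mono (by
        intro x hx; simpa using hx.2)
        _ = 0 := hBnull
    rw [h0, hdiff] at this
    simp at this
    exact absurd this (ne_of_gt hppos)
  exact lt_of_lt_of_le key (measure_mono hsub)
end
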